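/- arXiv:1810.09787 — 3 statements merged into one kernel-verified Lean document; each statement's English description precedes it below -/
import Mathlib

section
/- With t the infinite tribonacci word, B its sequence of positions of 0s, one has B(k+1) − B(k) = 2 − t(k)(t(k)−1)/2 for all k ≥ 0; equivalently the gap is 1 if t(k)=2 and 2 otherwise. -/
/-- The tribonacci substitution on letters: 0 ↦ 01, 1 ↦ 02, 2 ↦ 0. -/
def sigmaW : ℕ → List ℕ
  | 0 => [0, 1]
  | 1 => [0, 2]
  | _ => [0]

/-- The substitution extended to words (concatenation homomorphism). -/
def sigmaL (w : List ℕ) : List ℕ := w.flatMap sigmaW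

/-- The infinite tribonacci word t = 0,1,0,2,0,1,0,0,1,0,2,...,
the fixed point of the substitution starting from 0. -/
def t (n : ℕ) : ℕ := (sigmaL^[n + 1] [0]).getD n 0

/-- A(n): position of the (n+1)-st occurrence of the letter 1 in t. -/
noncomputable def A (n : ℕ) : ℕ := Nat.nth (fun k => t k = 1) n

/-- B(n): position of the (n+1)-st occurrence of the letter 0 in t. -/
noncomputable def B (n : ℕ) : ℕ := Nat.nth (fun k => t k = 0) n

/-- C(n): position of the (n+1)-st occurrence of the letter 2 in t. -/
noncomputable def C (n : ℕ) : ℕ := Nat.nth (fun k => t k = 2) n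


namespace TribAux

def W (m : ℕ) : List ℕ := sigmaL^[m] [0]

lemma sigmaL_append (u v : List ℕ) : sigmaL (u ++ v) = sigmaL u ++ sigmaL v :=
  List.flatMap_append

lemma sigmaL_cons (a : ℕ) (l : List ℕ) : sigmaL (a :: l) = sigmaW a ++ sigmaL l :=
  List.flatMap_cons

lemma sigmaW_length_pos (a : ℕ) : 0 < (sigmaW a).length := by
  rcases a with _ | _ | a <;> simp [sigmaW]

lemma sigmaW_head (a : ℕ) : (sigmaW a).getD 0 0 = 0 := by
  rcases a with _ | _ | a <;> simp [sigmaW]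

lemma sigmaL_length_ge (l : List ℕ) : l.length ≤ (sigmaL l).length := by
  induction l with
  | nil => simp [sigmaL]
  | cons a l ih =>
    rw [sigmaL_cons]
    have := sigmaW_length_pos a
    simp only [List.length_append, List.length_cons]
    omega

lemma W_succ (m : ℕ) : W (m + 1) = sigmaL (W m) :=
  Function.iterate_succ_apply' sigmaL m [0]

lemma sigmaL_prefix {u v : List ℕ} (h : u <+: v) : sigmaL u <+: sigmaL v := by
  obtain ⟨s, rfl⟩ := h
  exact ⟨sigmaL s, (sigmaL_append u s).symm⟩

lemma W_prefix_succ (m : ℕ) : W m <+: W (m + 1) := by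
  induction m with
  | zero => decide
  | succ n ih =>
    rw [W_succ, W_succ]
    exact sigmaL_prefix ih

lemma W_prefix {m m' : ℕ} (h : m ≤ m') : W m <+: W m' := by
  induction m', h using Nat.le_induction with
  | base => exact List.prefix_rfl
  | succ n hn ih => exact ih.trans (W_prefix_succ n)

lemma W_head (m : ℕ) : ∃ r, W m = 0 :: r := by
  obtain ⟨s, hs⟩ := W_prefix (Nat.zero_le m)
  exact ⟨s, by simpa [W, sigmaL] using hs.symm⟩

lemma W_length (m : ℕ) : m < (W m).length := by
  induction m with
  | zero => simp [W]
  | succ n ih =>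
    obtain ⟨r, hr⟩ := W_head n
    have h1 : r.length ≤ (sigmaL r).length := sigmaL_length_ge r
    have h2 : (W n).length = r.length + 1 := by rw [hr]; simp
    rw [W_succ, hr, sigmaL_cons]
    simp only [List.length_append]
    have : (sigmaW 0).length = 2 := by simp [sigmaW]
    omega

lemma getD_stable {m m' n : ℕ} (h : m ≤ m') (hn : n < (W m).length) :
    (W m).getD n 0 = (W m').getD n 0 := by
  obtain ⟨s, hs⟩ := W_prefix h
  rw [← hs, List.getD_append _ _ _ _ hn]

lemma t_eq (m n : ℕ) (hn : n < (W m).length) : (W m).getD n 0 = t n := by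
  have ht : t n = (W (n + 1)).getD n 0 := rfl
  have hn' : n < (W (n + 1)).length := Nat.lt_trans (Nat.lt_succ_self n) (W_length (n + 1))
  rcases le_total m (n + 1) with h | h
  · rw [ht, getD_stable h hn]
  · rw [ht, getD_stable h hn']

lemma take_W {k m : ℕ} (h : k ≤ m) : (W m).take k = (List.range k).map t := by
  induction k with
  | zero => simp
  | succ j ih =>
    have hj : j < (W m).length :=
      Nat.lt_trans (Nat.lt_of_lt_of_le (Nat.lt_succ_self j) h) (W_length m)
    have hwj : (W m)[j] = t j :=
      (List.getD_eq_getElem (W m) 0 hj).symm.trans (t_eq m j hj)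
    rw [List.take_succ, ih (Nat.le_of_succ_le h), List.range_succ, List.map_append,
      List.getElem?_eq_getElem hj, hwj]
    simp

def b : ℕ → ℕ
  | 0 => 0
  | k + 1 => b k + (sigmaW (t k)).length

lemma b_succ (k : ℕ) : b (k + 1) = b k + (sigmaW (t k)).length := rfl

lemma b_eq {k m : ℕ} (h : k ≤ m) : b k = (sigmaL ((W m).take k)).length := by
  induction k with
  | zero => simp [b, sigmaL]
  | succ j ih =>
    have h1 : (W m).take (j + 1) = (W m).take j ++ [t j] := by
      rw [take_W h, take_W (Nat.le_of_succ_le h), List.range_succ, List.map_append]; simp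
    rw [b_succ, ih (Nat.le_of_succ_le h), h1, sigmaL_append]
    simp [sigmaL]

lemma t_block (k j : ℕ) (hj : j < (sigmaW (t k)).length) :
    t (b k + j) = (sigmaW (t k)).getD j 0 := by
  set m := k + 1 with hm
  have hk : k < (W m).length := Nat.lt_trans (Nat.lt_succ_self k) (W_length m)
  have hwk : (W m)[k] = t k :=
    (List.getD_eq_getElem (W m) 0 hk).symm.trans (t_eq m k hk)
  have hdec : W (m + 1) = sigmaL ((W m).take k) ++ (sigmaW (t k) ++ sigmaL ((W m).drop (k + 1))) := by
    rw [W_succ]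
    conv_lhs => rw [← List.take_append_drop k (W m)]
    rw [sigmaL_append, List.drop_eq_getElem_cons hk, hwk, sigmaL_cons]
  have hb : b k = (sigmaL ((W m).take k)).length := b_eq (Nat.le_succ k)
  have hlen : b k + j < (W (m + 1)).length := by
    rw [hdec]
    simp only [List.length_append]
    omega
  rw [← t_eq (m + 1) (b k + j) hlen, hdec,
    List.getD_append_right _ _ _ _ (by omega : (sigmaL ((W m).take k)).length ≤ b k + j)]
  rw [← hb]
  have hjj : b k + j - b k = j := by omega
  rw [hjj, List.getD_append _ _ _ _ hj]

lemma t_b (k : ℕ) : t (b k) = 0 := by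
  have h := t_block k 0 (sigmaW_length_pos (t k))
  rw [sigmaW_head] at h
  simpa using h

lemma t_le (n : ℕ) : t n ≤ 2 := by
  have hn : n < (W (n + 1)).length := Nat.lt_trans (Nat.lt_succ_self n) (W_length (n + 1))
  have hmem : t n ∈ W (n + 1) := by
    rw [← t_eq (n + 1) n hn, List.getD_eq_getElem (W (n + 1)) 0 hn]
    exact List.getElem_mem hn
  rw [W_succ] at hmem
  simp only [sigmaL, List.mem_flatMap] at hmem
  obtain ⟨a, -, hx⟩ := hmem
  rcases a with _ | _ | a <;> simp [sigmaW] at hx <;> omega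

lemma sigmaW_len_ne2 (k : ℕ) (h : t k ≠ 2) : (sigmaW (t k)).length = 2 := by
  have := t_le k
  interval_cases h' : (t k) <;> simp_all [sigmaW]

lemma t_b_succ (k : ℕ) (h : t k ≠ 2) : t (b k + 1) ≠ 0 := by
  have h2 : (sigmaW (t k)).length = 2 := sigmaW_len_ne2 k h
  have hb := t_block k 1 (by omega)
  have hle := t_le k
  interval_cases h' : (t k) <;> simp_all [sigmaW]

lemma count_b (k : ℕ) : Nat.count (fun n => t n = 0) (b k) = k := by
  induction k with
  | zero => simp [b]
  | succ j ih =>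
    by_cases h : t j = 2
    · have hb : b (j + 1) = b j + 1 := by rw [b_succ, h]; rfl
      rw [hb, Nat.count_succ, ih, if_pos (t_b j)]
    · have hb : b (j + 1) = b j + 2 := by rw [b_succ, sigmaW_len_ne2 j h]
      rw [hb, show b j + 2 = (b j + 1) + 1 from rfl, Nat.count_succ, Nat.count_succ, ih,
        if_pos (t_b j), if_neg (t_b_succ j h)]

lemma B_eq (k : ℕ) : B k = b k := by
  have h := Nat.nth_count (p := fun n => t n = 0) (t_b k)
  rw [count_b] at h
  exact h

end TribAux

/-- B(k+1) − B(k) = 2 − t(k)(t(k)−1)/2; equivalently the gap is 1 if t(k)=2 and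
2 otherwise. -/
theorem B_diff (k : ℕ) :
    2 * ((B (k + 1) : ℤ) - B k) = 4 - (t k : ℤ) * ((t k : ℤ) - 1) ∧
    (t k = 2 → B (k + 1) = B k + 1) ∧ (t k ≠ 2 → B (k + 1) = B k + 2) := by
  have hle := TribAux.t_le k
  by_cases h : t k = 2
  · have hlen : (sigmaW (t k)).length = 1 := by rw [h]; rfl
    refine ⟨?_, fun _ => ?_, fun h' => absurd h h'⟩
    · rw [TribAux.B_eq (k + 1), TribAux.B_eq k, TribAux.b_succ, hlen, h]
      push_cast
      ring
    · rw [TribAux.B_eq (k + 1), TribAux.B_eq k, TribAux.b_succ, hlen]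
  · have hlen : (sigmaW (t k)).length = 2 := TribAux.sigmaW_len_ne2 k h
    have h01 : t k = 0 ∨ t k = 1 := by omega
    refine ⟨?_, fun h' => absurd h' h, fun _ => ?_⟩
    · rw [TribAux.B_eq (k + 1), TribAux.B_eq k, TribAux.b_succ, hlen]
      rcases h01 with h' | h' <;> rw [h'] <;> push_cast <;> ring
    · rw [TribAux.B_eq (k + 1), TribAux.B_eq k, TribAux.b_succ, hlen]
end

section
/- With t the infinite tribonacci word, C its sequence of positions of 2s, one has C(k+1) − C(k) = 7 − t(k)(t(k)+1)/2 for all k ≥ 0. -/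
/-! ### Auxiliary machinery -/

/-- `L n` is the starting position of the `n`-th block `σ(t n)` in `t = σ(t)`. -/
def L : ℕ → ℕ
  | 0 => 0
  | n + 1 => L n + (sigmaW (t n)).length

lemma sigmaW_len_pos (a : ℕ) : 0 < (sigmaW a).length := by
  match a with
  | 0 => simp [sigmaW]
  | 1 => simp [sigmaW]
  | n + 2 => simp [sigmaW]

lemma sigmaW_getD_zero (a : ℕ) : (sigmaW a).getD 0 0 = 0 := by
  match a with
  | 0 => simp [sigmaW]
  | 1 => simp [sigmaW]
  | n + 2 => simp [sigmaW]

lemma sigmaL_nil : sigmaL [] = [] := rfl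

lemma sigmaL_cons (a : ℕ) (w : List ℕ) : sigmaL (a :: w) = sigmaW a ++ sigmaL w := by
  simp [sigmaL]

lemma sigmaL_append (u v : List ℕ) : sigmaL (u ++ v) = sigmaL u ++ sigmaL v := by
  simp [sigmaL]

lemma sigmaL_len (w : List ℕ) : w.length ≤ (sigmaL w).length := by
  induction w with
  | nil => simp [sigmaL]
  | cons a w ih =>
      rw [sigmaL_cons, List.length_append, List.length_cons]
      have := sigmaW_len_pos a
      omega

/-- iterated word -/
def wd (m : ℕ) : List ℕ := sigmaL^[m] [0]

lemma wd_succ (m : ℕ) : wd (m + 1) = sigmaL (wd m) := by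
  simp [wd, Function.iterate_succ_apply']

lemma sigmaL_prefix {u v : List ℕ} (h : u <+: v) : sigmaL u <+: sigmaL v := by
  obtain ⟨w, rfl⟩ := h
  rw [sigmaL_append]
  exact ⟨sigmaL w, rfl⟩

lemma wd_prefix_succ (m : ℕ) : wd m <+: wd (m + 1) := by
  induction m with
  | zero => exact ⟨[1], rfl⟩
  | succ m ih =>
      rw [wd_succ, wd_succ]
      exact sigmaL_prefix ih

lemma wd_prefix {m m' : ℕ} (h : m ≤ m') : wd m <+: wd m' := by
  induction m' with
  | zero => simpa [Nat.le_zero.1 h]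
  | succ m' ih =>
      rcases Nat.lt_or_ge m (m' + 1) with h' | h'
      · exact (ih (by omega)).trans (wd_prefix_succ m')
      · have : m = m' + 1 := by omega
        simp [this]

lemma wd_head (m : ℕ) : ∃ rest, wd m = 0 :: rest := by
  induction m with
  | zero => exact ⟨[], rfl⟩
  | succ m ih =>
      obtain ⟨rest, hr⟩ := ih
      refine ⟨1 :: sigmaL rest, ?_⟩
      rw [wd_succ, hr, sigmaL_cons]
      rfl

lemma wd_len (m : ℕ) : m + 1 ≤ (wd m).length := by
  induction m with
  | zero => simp [wd]
  | succ m ih =>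
      obtain ⟨rest, hr⟩ := wd_head m
      have h1 : (wd (m + 1)).length = 2 + (sigmaL rest).length := by
        rw [wd_succ, hr, sigmaL_cons]; simp [sigmaW]; omega
      have h2 := sigmaL_len rest
      have h3 : (wd m).length = rest.length + 1 := by rw [hr]; rfl
      omega

lemma prefix_getD {u v : List ℕ} (h : u <+: v) {n : ℕ} (hn : n < u.length) :
    v.getD n 0 = u.getD n 0 := by
  obtain ⟨w, rfl⟩ := h
  exact List.getD_append u w 0 n hn

lemma t_eq (m n : ℕ) (h : n < (wd m).length) : t n = (wd m).getD n 0 := by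
  have hdef : t n = (wd (n + 1)).getD n 0 := rfl
  have hn1 : n < (wd (n + 1)).length := by have := wd_len (n + 1); omega
  rcases le_total m (n + 1) with h' | h'
  · rw [hdef, prefix_getD (wd_prefix h') h]
  · rw [hdef, prefix_getD (wd_prefix h') hn1]

lemma t_le_two (n : ℕ) : t n ≤ 2 := by
  have key : ∀ m, ∀ x ∈ wd m, x ≤ 2 := by
    intro m
    induction m with
    | zero => intro x hx; simp [wd] at hx; omega
    | succ m ih =>
        intro x hx
        rw [wd_succ] at hx
        obtain ⟨a, ha, hxa⟩ := List.mem_flatMap.1 hx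
        have ha2 := ih a ha
        interval_cases a <;> simp [sigmaW] at hxa <;> omega
  have hn1 : n < (wd (n + 1)).length := by have := wd_len (n + 1); omega
  rw [t_eq (n + 1) n hn1, List.getD_eq_getElem _ _ hn1]
  exact key (n + 1) _ (List.getElem_mem _)

lemma L_take (m n : ℕ) (h : n ≤ (wd m).length) :
    L n = (sigmaL ((wd m).take n)).length := by
  induction n with
  | zero => simp [L, sigmaL]
  | succ n ih =>
      have hn : n < (wd m).length := by omega
      have htake : (wd m).take (n + 1) = (wd m).take n ++ [(wd m)[n]] := by
        rw [List.take_succ, List.getElem?_eq_getElem hn]; rfl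
      rw [htake, sigmaL_append]
      have htn : t n = (wd m)[n] := by
        rw [t_eq m n hn, List.getD_eq_getElem _ _ hn]
      show L n + (sigmaW (t n)).length = _
      rw [ih (by omega), List.length_append, htn]
      simp [sigmaL]

lemma t_block (n i : ℕ) (hi : i < (sigmaW (t n)).length) :
    t (L n + i) = (sigmaW (t n)).getD i 0 := by
  set m := n + 1 with hm
  have hn : n < (wd m).length := by have := wd_len m; omega
  have htn : t n = (wd m)[n] := by rw [t_eq m n hn, List.getD_eq_getElem _ _ hn]
  have htake : (wd m).take (n + 1) = (wd m).take n ++ [(wd m)[n]] := by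
    rw [List.take_succ, List.getElem?_eq_getElem hn]; rfl
  have hLn : L n = (sigmaL ((wd m).take n)).length := L_take m n (by omega)
  have hsplit : wd (m + 1) = sigmaL ((wd m).take n) ++ (sigmaW (t n) ++ sigmaL ((wd m).drop (n + 1))) := by
    rw [wd_succ]
    conv_lhs => rw [← List.take_append_drop (n + 1) (wd m)]
    rw [sigmaL_append, htake, sigmaL_append, htn]
    simp [sigmaL]
  have hlen : L n + i < (wd (m + 1)).length := by
    rw [hsplit]
    simp only [List.length_append]
    omega
  rw [t_eq (m + 1) (L n + i) hlen, hsplit]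
  rw [List.getD_append_right _ _ _ _ (by omega : (sigmaL ((wd m).take n)).length ≤ L n + i)]
  rw [← hLn, Nat.add_sub_cancel_left]
  exact List.getD_append _ _ _ _ hi

lemma sigmaW_len_of_le_one {a : ℕ} (h : a ≤ 1) : (sigmaW a).length = 2 := by
  interval_cases a <;> rfl

lemma L_succ₀ {n : ℕ} (h : t n = 0) : L (n + 1) = L n + 2 := by
  show L n + (sigmaW (t n)).length = _
  rw [h]; rfl

lemma L_succ₁ {n : ℕ} (h : t n = 1) : L (n + 1) = L n + 2 := by
  show L n + (sigmaW (t n)).length = _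
  rw [h]; rfl

lemma L_succ₂ {n : ℕ} (h : t n = 2) : L (n + 1) = L n + 1 := by
  show L n + (sigmaW (t n)).length = _
  rw [h]; rfl

lemma t_L (n : ℕ) : t (L n) = 0 := by
  have := t_block n 0 (sigmaW_len_pos (t n))
  rw [sigmaW_getD_zero] at this
  simpa using this

lemma t_L₀ {n : ℕ} (h : t n = 0) : t (L n + 1) = 1 := by
  have := t_block n 1 (by rw [h]; simp [sigmaW])
  rw [h] at this
  simpa [sigmaW] using this

lemma t_L₁ {n : ℕ} (h : t n = 1) : t (L n + 1) = 2 := by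
  have := t_block n 1 (by rw [h]; simp [sigmaW])
  rw [h] at this
  simpa [sigmaW] using this

lemma L_lt_succ (n : ℕ) : L n < L (n + 1) := by
  have := sigmaW_len_pos (t n)
  show L n < L n + (sigmaW (t n)).length
  omega

lemma L_strictMono : StrictMono L := strictMono_nat_of_lt_succ L_lt_succ

lemma L_succ_le (n : ℕ) : L (n + 1) ≤ L n + 2 := by
  have h := t_le_two n
  have : t n = 0 ∨ t n = 1 ∨ t n = 2 := by omega
  rcases this with h | h | h
  · rw [L_succ₀ h]
  · rw [L_succ₁ h]
  · rw [L_succ₂ h]; omega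

lemma exists_block (m : ℕ) : ∃ n, L n ≤ m ∧ m < L (n + 1) := by
  induction m with
  | zero => exact ⟨0, le_refl _, by simpa [L] using L_lt_succ 0⟩
  | succ m ih =>
      obtain ⟨n, h1, h2⟩ := ih
      rcases Nat.lt_or_ge (m + 1) (L (n + 1)) with h | h
      · exact ⟨n, by omega, h⟩
      · exact ⟨n + 1, h, by have := L_lt_succ (n + 1); omega⟩

lemma t_eq_zero_iff (m : ℕ) : t m = 0 ↔ ∃ n, L n = m := by
  constructor
  · intro hm
    obtain ⟨n, h1, h2⟩ := exists_block m
    rcases eq_or_lt_of_le h1 with h | h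
    · exact ⟨n, h⟩
    · exfalso
      have h3 := L_succ_le n
      have hm1 : m = L n + 1 := by omega
      have h4 : t n ≠ 2 := by
        intro h4; rw [L_succ₂ h4] at h2; omega
      have h5 := t_le_two n
      have : t n = 0 ∨ t n = 1 := by omega
      rcases this with h6 | h6
      · rw [hm1, t_L₀ h6] at hm; omega
      · rw [hm1, t_L₁ h6] at hm; omega
  · rintro ⟨n, rfl⟩; exact t_L n

lemma t_eq_one_iff (m : ℕ) : t m = 1 ↔ ∃ n, t n = 0 ∧ L n + 1 = m := by
  constructor
  · intro hm
    obtain ⟨n, h1, h2⟩ := exists_block m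
    have h3 := L_succ_le n
    rcases eq_or_lt_of_le h1 with h | h
    · rw [← h, t_L n] at hm; omega
    · have hm1 : m = L n + 1 := by omega
      have h4 : t n ≠ 2 := by
        intro h4; rw [L_succ₂ h4] at h2; omega
      have h5 := t_le_two n
      have : t n = 0 ∨ t n = 1 := by omega
      rcases this with h6 | h6
      · exact ⟨n, h6, hm1.symm⟩
      · rw [hm1, t_L₁ h6] at hm; omega
  · rintro ⟨n, hn, rfl⟩; exact t_L₀ hn

lemma t_eq_two_iff (m : ℕ) : t m = 2 ↔ ∃ n, t n = 1 ∧ L n + 1 = m := by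
  constructor
  · intro hm
    obtain ⟨n, h1, h2⟩ := exists_block m
    have h3 := L_succ_le n
    rcases eq_or_lt_of_le h1 with h | h
    · rw [← h, t_L n] at hm; omega
    · have hm1 : m = L n + 1 := by omega
      have h4 : t n ≠ 2 := by
        intro h4; rw [L_succ₂ h4] at h2; omega
      have h5 := t_le_two n
      have : t n = 0 ∨ t n = 1 := by omega
      rcases this with h6 | h6
      · rw [hm1, t_L₀ h6] at hm; omega
      · exact ⟨n, h6, hm1.symm⟩
  · rintro ⟨n, hn, rfl⟩; exact t_L₁ hn

lemma nth_eq_of_strictMono (p : ℕ → Prop) [DecidablePred p] (f : ℕ → ℕ)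
    (hf : StrictMono f) (h : ∀ m, p m ↔ ∃ n, f n = m) (n : ℕ) :
    Nat.nth p n = f n := by
  have hp : p (f n) := (h _).2 ⟨n, rfl⟩
  have hc : Nat.count p (f n) = n := by
    rw [Nat.count_eq_card_filter_range]
    have heq : (Finset.range (f n)).filter p = (Finset.range n).image f := by
      ext k
      simp only [Finset.mem_filter, Finset.mem_range, Finset.mem_image]
      constructor
      · rintro ⟨hk, hpk⟩
        obtain ⟨j, rfl⟩ := (h k).1 hpk
        exact ⟨j, hf.lt_iff_lt.1 hk, rfl⟩
      · rintro ⟨j, hj, rfl⟩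
        exact ⟨hf.lt_iff_lt.2 hj, (h _).2 ⟨j, rfl⟩⟩
    rw [heq, Finset.card_image_of_injective _ hf.injective, Finset.card_range]
  have := Nat.nth_count hp
  rwa [hc] at this

lemma C_eq (n : ℕ) : C n = L (L (L n) + 1) + 1 := by
  have hmono : StrictMono fun n => L (L (L n) + 1) + 1 := by
    intro a b hab
    dsimp only
    have h1 := L_strictMono (L_strictMono hab)
    have h2 := L_strictMono (show L (L a) + 1 < L (L b) + 1 by omega)
    omega
  refine nth_eq_of_strictMono _ _ hmono (fun m => ?_) n
  rw [t_eq_two_iff]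
  constructor
  · rintro ⟨j, hj, rfl⟩
    obtain ⟨i, hi, rfl⟩ := (t_eq_one_iff j).1 hj
    obtain ⟨n', rfl⟩ := (t_eq_zero_iff i).1 hi
    exact ⟨n', rfl⟩
  · rintro ⟨n', rfl⟩
    refine ⟨L (L n') + 1, ?_, rfl⟩
    exact (t_eq_one_iff _).2 ⟨L n', t_L n', rfl⟩

/-- C(k+1) − C(k) = 7 − t(k)(t(k)+1)/2 for all k ≥ 0. -/
theorem C_diff (k : ℕ) :
    2 * ((C (k + 1) : ℤ) - C k) = 14 - (t k : ℤ) * ((t k : ℤ) + 1) := by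
  have htk := t_le_two k
  have hck : C k = L (L (L k) + 1) + 1 := C_eq k
  have hb : t (L k) = 0 := t_L k
  have hc : t (L (L k)) = 0 := t_L (L k)
  have hc1 : t (L (L k) + 1) = 1 := t_L₀ hb
  have e2 : L (L k + 1) = L (L k) + 2 := L_succ₀ hb
  have : t k = 0 ∨ t k = 1 ∨ t k = 2 := by omega
  rcases this with h0 | h1 | h2
  · -- t k = 0
    have e1 : L (k + 1) = L k + 2 := L_succ₀ h0
    have hb1 : t (L k + 1) = 1 := t_L₀ h0
    have e3 : L (L k + 2) = L (L k + 1) + 2 := L_succ₁ hb1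
    have hc2 : t (L (L k) + 2) = 0 := by have := t_L (L k + 1); rwa [e2] at this
    have hc3 : t (L (L k) + 3) = 2 := by have := t_L₁ hb1; rwa [e2] at this
    have hc4 : t (L (L k) + 4) = 0 := by have := t_L (L k + 2); rw [e3, e2] at this; exact this
    have f1 : L (L (L k) + 2) = L (L (L k) + 1) + 2 := L_succ₁ hc1
    have f2 : L (L (L k) + 3) = L (L (L k) + 2) + 2 := L_succ₀ hc2
    have f3 : L (L (L k) + 4) = L (L (L k) + 3) + 1 := L_succ₂ hc3
    have f4 : L (L (L k) + 5) = L (L (L k) + 4) + 2 := L_succ₀ hc4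
    have hck1 : C (k + 1) = L (L (L k) + 5) + 1 := by
      rw [C_eq, e1]
      have : L (L k + 2) + 1 = L (L k) + 5 := by omega
      rw [this]
    rw [hck, hck1, h0]
    push_cast
    omega
  · -- t k = 1
    have e1 : L (k + 1) = L k + 2 := L_succ₁ h1
    have hb1 : t (L k + 1) = 2 := t_L₁ h1
    have e3 : L (L k + 2) = L (L k + 1) + 1 := L_succ₂ hb1
    have hc2 : t (L (L k) + 2) = 0 := by have := t_L (L k + 1); rwa [e2] at this
    have hc3 : t (L (L k) + 3) = 0 := by have := t_L (L k + 2); rw [e3, e2] at this; exact this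
    have f1 : L (L (L k) + 2) = L (L (L k) + 1) + 2 := L_succ₁ hc1
    have f2 : L (L (L k) + 3) = L (L (L k) + 2) + 2 := L_succ₀ hc2
    have f3 : L (L (L k) + 4) = L (L (L k) + 3) + 2 := L_succ₀ hc3
    have hck1 : C (k + 1) = L (L (L k) + 4) + 1 := by
      rw [C_eq, e1]
      have : L (L k + 2) + 1 = L (L k) + 4 := by omega
      rw [this]
    rw [hck, hck1, h1]
    push_cast
    omega
  · -- t k = 2
    have e1 : L (k + 1) = L k + 1 := L_succ₂ h2
    have hc2 : t (L (L k) + 2) = 0 := by have := t_L (L k + 1); rwa [e2] at this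
    have f1 : L (L (L k) + 2) = L (L (L k) + 1) + 2 := L_succ₁ hc1
    have f2 : L (L (L k) + 3) = L (L (L k) + 2) + 2 := L_succ₀ hc2
    have hck1 : C (k + 1) = L (L (L k) + 3) + 1 := by
      rw [C_eq, e1]
      have : L (L k + 1) + 1 = L (L k) + 3 := by omega
      rw [this]
    rw [hck, hck1, h2]
    push_cast
    omega
end

section
/- For the tribonacci position sequences A, B, C (positions of 1, 0, 2 in the infinite tribonacci word), the composition B∘A satisfies B(A(k)) = A(k) + B(k) + k + 1 for all k ≥ 0; equivalently B(A(k)) = C(k) − 1. -/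
namespace Trib

lemma sigmaL_append (u v : List ℕ) : sigmaL (u ++ v) = sigmaL u ++ sigmaL v :=
  by simp [sigmaL]

lemma sigmaL_cons (a : ℕ) (l : List ℕ) : sigmaL (a :: l) = sigmaW a ++ sigmaL l :=
  by simp [sigmaL]

lemma sigmaL_singleton (a : ℕ) : sigmaL [a] = sigmaW a := by
  simp [sigmaL_cons, sigmaL]

lemma length_sigmaW (a : ℕ) : 1 ≤ (sigmaW a).length := by
  rcases a with _ | _ | m <;> simp [sigmaW]

lemma length_sigmaL (l : List ℕ) : l.length ≤ (sigmaL l).length := by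
  induction l with
  | nil => simp [sigmaL]
  | cons a l ih =>
    rw [sigmaL_cons, List.length_append, List.length_cons]
    have := length_sigmaW a
    omega

/-- the finite approximations -/
def W (n : ℕ) : List ℕ := sigmaL^[n] [0]

lemma W_succ (n : ℕ) : W (n + 1) = sigmaL (W n) := Function.iterate_succ_apply' _ _ _

lemma W_head (n : ℕ) : ∃ l, W n = 0 :: l := by
  induction n with
  | zero => exact ⟨[], rfl⟩
  | succ n ih =>
    obtain ⟨l, hl⟩ := ih
    exact ⟨1 :: sigmaL l, by rw [W_succ, hl, sigmaL_cons]; rfl⟩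

lemma W_length (n : ℕ) : n + 1 ≤ (W n).length := by
  induction n with
  | zero => simp [W]
  | succ n ih =>
    obtain ⟨l, hl⟩ := W_head n
    have h1 : l.length ≤ (sigmaL l).length := length_sigmaL l
    have : W (n + 1) = 0 :: 1 :: sigmaL l := by rw [W_succ, hl, sigmaL_cons]; rfl
    rw [this]
    rw [hl] at ih
    simp at ih ⊢
    omega

lemma W_prefix (n : ℕ) : W n <+: W (n + 1) := by
  induction n with
  | zero => exact ⟨[1], by simp [W, sigmaL, sigmaW]⟩
  | succ n ih =>
    obtain ⟨s, hs⟩ := ih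
    exact ⟨sigmaL s, by rw [W_succ, W_succ, ← hs, sigmaL_append]⟩

lemma W_prefix_le {m m' : ℕ} (h : m ≤ m') : W m <+: W m' := by
  induction m', h using Nat.le_induction with
  | base => exact List.prefix_refl _
  | succ k hk ih => exact ih.trans (W_prefix k)

lemma getD_prefix {u v : List ℕ} (h : u <+: v) {i : ℕ} (hi : i < u.length) :
    v.getD i 0 = u.getD i 0 := by
  obtain ⟨s, rfl⟩ := h
  exact List.getD_append u s 0 i hi

lemma t_eq_W {m i : ℕ} (hi : i < (W m).length) : t i = (W m).getD i 0 := by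
  have ht : t i = (W (i + 1)).getD i 0 := rfl
  rcases le_total (i + 1) m with h | h
  · rw [ht, getD_prefix (W_prefix_le h) (by have := W_length (i + 1); omega)]
  · rw [ht, getD_prefix (W_prefix_le h) hi]

/-- prefix of t of length n -/
def u (n : ℕ) : List ℕ := (List.range n).map t

lemma u_length (n : ℕ) : (u n).length = n := by simp [u]

lemma u_getD {i n : ℕ} (h : i < n) : (u n).getD i 0 = t i := by
  rw [List.getD_eq_getElem _ _ (by simp [u_length, h])]
  simp [u]

lemma u_succ (n : ℕ) : u (n + 1) = u n ++ [t n] := by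
  simp [u, List.range_succ]

lemma u_eq_take {n m : ℕ} (h : n ≤ (W m).length) : u n = (W m).take n := by
  apply List.ext_getElem
  · simp [u_length, h]
  · intro i h1 h2
    rw [u_length] at h1
    have hiw : i < (W m).length := lt_of_lt_of_le h1 h
    have : (u n)[i] = t i := by
      have := u_getD (n := n) (i := i) h1
      rwa [List.getD_eq_getElem _ _ (by simp [u_length, h1])] at this
    rw [this, List.getElem_take]
    have := t_eq_W hiw
    rwa [List.getD_eq_getElem _ _ hiw] at this

/-- length of the image of the length-n prefix -/
def Len (n : ℕ) : ℕ := (sigmaL (u n)).length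

lemma sigma_u (n : ℕ) : sigmaL (u n) = u (Len n) := by
  have h1 : n ≤ (W n).length := le_of_lt (W_length n)
  have h2 : u n <+: W n := by rw [u_eq_take h1]; exact List.take_prefix _ _
  obtain ⟨s, hs⟩ := h2
  have h3 : sigmaL (u n) <+: W (n + 1) := by
    rw [W_succ, ← hs, sigmaL_append]; exact ⟨sigmaL s, rfl⟩
  have h4 : Len n ≤ (W (n + 1)).length := by
    rw [Len]; exact h3.length_le
  rw [u_eq_take h4]
  obtain ⟨s', hs'⟩ := h3
  rw [← hs']
  have : Len n = (sigmaL (u n)).length := rfl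
  rw [this, List.take_left]

lemma block (n : ℕ) : u (Len (n + 1)) = u (Len n) ++ sigmaW (t n) := by
  rw [← sigma_u, ← sigma_u, u_succ, sigmaL_append, sigmaL_singleton]

lemma Len_succ (n : ℕ) : Len (n + 1) = Len n + (sigmaW (t n)).length := by
  have := congrArg List.length (block n)
  simpa [u_length] using this

lemma letter {n j : ℕ} (hj : j < (sigmaW (t n)).length) :
    t (Len n + j) = (sigmaW (t n)).getD j 0 := by
  have h1 : Len n + j < Len (n + 1) := by rw [Len_succ]; omega
  rw [← u_getD h1, block, List.getD_append_right _ _ _ _ (by rw [u_length]; omega),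
    u_length, Nat.add_sub_cancel_left]

lemma t_Len (n : ℕ) : t (Len n) = 0 := by
  have := letter (n := n) (j := 0) (by have := length_sigmaW (t n); omega)
  rw [Nat.add_zero] at this
  rw [this]
  rcases t n with _ | _ | m <;> simp [sigmaW]

lemma F1 {n : ℕ} (h : t n = 0) : t (Len n + 1) = 1 ∧ Len (n + 1) = Len n + 2 := by
  have hw : sigmaW (t n) = [0, 1] := by rw [h]; rfl
  constructor
  · have := letter (n := n) (j := 1) (by rw [hw]; simp)
    rwa [hw] at this
  · rw [Len_succ, hw]; rfl

lemma F2 {n : ℕ} (h : t n = 1) : t (Len n + 1) = 2 ∧ Len (n + 1) = Len n + 2 := by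
  have hw : sigmaW (t n) = [0, 2] := by rw [h]; rfl
  constructor
  · have := letter (n := n) (j := 1) (by rw [hw]; simp)
    rwa [hw] at this
  · rw [Len_succ, hw]; rfl

lemma F3 {n : ℕ} (h0 : t n ≠ 0) (h1 : t n ≠ 1) : Len (n + 1) = Len n + 1 := by
  have hw : sigmaW (t n) = [0] := by
    rcases hn : t n with _ | _ | m
    · exact absurd hn h0
    · exact absurd hn h1
    · rfl
  rw [Len_succ, hw]; rfl

lemma Len_mono : StrictMono Len := by
  apply strictMono_nat_of_lt_succ
  intro n
  rw [Len_succ]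
  have := length_sigmaW (t n)
  omega

noncomputable def c (x n : ℕ) : ℕ := Nat.count (fun k => t k = x) n

lemma counts (n : ℕ) : c 0 (Len n) = n ∧ c 1 (Len n) = c 0 n ∧ c 2 (Len n) = c 1 n := by
  induction n with
  | zero =>
    have h0 : Len 0 = 0 := by simp [Len, u, sigmaL]
    simp [h0, c]
  | succ n ih =>
    obtain ⟨ih0, ih1, ih2⟩ := ih
    have hL0 : t (Len n) = 0 := t_Len n
    have hcsucc : ∀ x m, c x (m + 1) = c x m + if t m = x then 1 else 0 := by
      intro x m; exact Nat.count_succ _ m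
    by_cases h0 : t n = 0
    · obtain ⟨ha, hb⟩ := F1 h0
      rw [hb, show Len n + 2 = (Len n + 1) + 1 from rfl]
      simp only [hcsucc, ha, hL0]
      simp [ih0, ih1, ih2, h0]
    · by_cases h1 : t n = 1
      · obtain ⟨ha, hb⟩ := F2 h1
        rw [hb, show Len n + 2 = (Len n + 1) + 1 from rfl]
        simp only [hcsucc, ha, hL0]
        simp [ih0, ih1, ih2, h0, h1]
      · rw [F3 h0 h1]
        simp only [hcsucc, hL0]
        simp [ih0, ih1, ih2, h0, h1]

lemma Len_eq (n : ℕ) : Len n = n + c 0 n + c 1 n := by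
  induction n with
  | zero => simp [Len, u, sigmaL, c]
  | succ n ih =>
    have hcsucc : ∀ x m, c x (m + 1) = c x m + if t m = x then 1 else 0 := by
      intro x m; exact Nat.count_succ _ m
    by_cases h0 : t n = 0
    · rw [(F1 h0).2]; simp only [hcsucc]; simp [h0, ih]; omega
    · by_cases h1 : t n = 1
      · rw [(F2 h1).2]; simp only [hcsucc]; simp [h0, h1, ih]; omega
      · rw [F3 h0 h1]; simp only [hcsucc]; simp [h0, h1, ih]; omega

lemma inf0 : {k | t k = 0}.Infinite :=
  Set.infinite_of_injective_forall_mem (f := Len) Len_mono.injective t_Len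

lemma inf1 : {k | t k = 1}.Infinite := by
  apply Set.infinite_of_injective_forall_mem (f := fun n => Len (Len n) + 1)
  · intro a b hab
    simp only [add_left_inj] at hab
    exact Len_mono.injective (Len_mono.injective hab)
  · intro n
    exact (F1 (t_Len n)).1

lemma inf2 : {k | t k = 2}.Infinite := by
  apply Set.infinite_of_injective_forall_mem (f := fun n => Len (Len (Len n) + 1) + 1)
  · intro a b hab
    simp only [add_left_inj] at hab
    have := Len_mono.injective hab
    simp only [add_left_inj] at this
    exact Len_mono.injective (Len_mono.injective this)
  · intro n
    exact (F2 (F1 (t_Len n)).1).1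

lemma B_eq (n : ℕ) : B n = Len n := by
  have h0 : t (Len n) = 0 := t_Len n
  have hc : Nat.count (fun k => t k = 0) (Len n) = n := (counts n).1
  have h := Nat.nth_count (p := fun k => t k = 0) h0
  rw [hc] at h
  exact h

lemma tB (n : ℕ) : t (B n) = 0 := Nat.nth_mem_of_infinite inf0 n

lemma tA (n : ℕ) : t (A n) = 1 := Nat.nth_mem_of_infinite inf1 n

lemma A_eq (n : ℕ) : A n = Len (B n) + 1 := by
  have h1 : t (Len (B n) + 1) = 1 := (F1 (tB n)).1
  have hc : Nat.count (fun k => t k = 1) (Len (B n) + 1) = n := by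
    rw [Nat.count_succ]
    have : c 1 (Len (B n)) = c 0 (B n) := (counts (B n)).2.1
    have h2 : c 0 (B n) = n := Nat.count_nth_of_infinite inf0 n
    simp only [t_Len (B n)]
    simp only [c] at this h2
    rw [this, h2]
    simp
  have h := Nat.nth_count (p := fun k => t k = 1) h1
  rw [hc] at h
  exact h

lemma C_eq (n : ℕ) : C n = Len (A n) + 1 := by
  have h1 : t (Len (A n) + 1) = 2 := (F2 (tA n)).1
  have hc : Nat.count (fun k => t k = 2) (Len (A n) + 1) = n := by
    rw [Nat.count_succ]
    have : c 2 (Len (A n)) = c 1 (A n) := (counts (A n)).2.2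
    have h2 : c 1 (A n) = n := Nat.count_nth_of_infinite inf1 n
    simp only [t_Len (A n)]
    simp only [c] at this h2
    rw [this, h2]
    simp
  have h := Nat.nth_count (p := fun k => t k = 2) h1
  rw [hc] at h
  exact h

end Trib

open Trib in
/-- B(A(k)) = A(k) + B(k) + k + 1; equivalently B(A(k)) = C(k) − 1. -/
theorem B_comp_A (k : ℕ) : B (A k) = A k + B k + k + 1 ∧ B (A k) = C k - 1 := by
  have hBA : B (A k) = Len (A k) := B_eq (A k)
  have hL : Len (A k) = A k + c 0 (A k) + c 1 (A k) := Len_eq (A k)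
  have hc1 : c 1 (A k) = k := Nat.count_nth_of_infinite inf1 k
  have hc0 : c 0 (A k) = B k + 1 := by
    rw [A_eq k, c, Nat.count_succ]
    have h1 : c 0 (Len (B k)) = B k := (counts (B k)).1
    simp only [t_Len (B k)]
    simp only [c] at h1
    rw [h1]
    simp
  have hC : C k = Len (A k) + 1 := C_eq k
  constructor
  · omega
  · omega
end
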